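/- Let 𝒜 ⊂ ℕ be a finite set of positive integers, let l > 0, and let Q, Q' be distinct points of 𝕋² = ℝ²/ℤ² with rational coordinates. Then there exists C > 0 such that for every line segment L ⊂ 𝕋² with midpoint Q, length at most l, and irrational slope of the form [a_1, a_2, …] with all a_i ∈ 𝒜, one has dist(L, Q') > C. -/
import Mathlib


/-- The value of the finite continued fraction `[a₁,…,aₙ]`. -/
noncomputable def cfFin : List ℕ → ℝ
  | [] => 0
  | a :: l => 1 / ((a : ℝ) + cfFin l)

/-- `α = [a₁, a₂, …]`: the finite truncations of the continued fraction with partial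
quotients `a 0 = a₁, a 1 = a₂, …` converge to `α`. -/
def cfLim (a : ℕ → ℕ) (α : ℝ) : Prop :=
  Filter.Tendsto (fun n => cfFin (List.ofFn fun i : Fin n => a i)) Filter.atTop (nhds α)

/-- The set of admissible slopes. -/
def cfS (𝒜 : Finset ℕ) : Set ℝ := {α | ∃ a : ℕ → ℕ, (∀ i, a i ∈ 𝒜) ∧ cfLim a α}

lemma cfFin_cons (a : ℕ) (l : List ℕ) : cfFin (a :: l) = 1 / ((a:ℝ) + cfFin l) := rfl

lemma cfFin_mem (l : List ℕ) (h : ∀ x ∈ l, 1 ≤ x) : cfFin l ∈ Set.Icc (0:ℝ) 1 := by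
  induction l with
  | nil => simp [cfFin]
  | cons a l ih =>
    have ha : (1:ℝ) ≤ a := by exact_mod_cast h a (by simp)
    have hx := ih (fun x hx => h x (by simp [hx]))
    have hpos : (0:ℝ) < a + cfFin l := by linarith [hx.1]
    rw [cfFin_cons]
    constructor
    · positivity
    · rw [div_le_one hpos]; linarith [hx.1]

/-- Structure lemma: every element of `cfS 𝒜` has the form `1/(a₀+β)` with `β ∈ cfS 𝒜 ∩ [0,1]`. -/
lemma cfS_struct {𝒜 : Finset ℕ} (h𝒜 : ∀ x ∈ 𝒜, 1 ≤ x) {α : ℝ} (hα : α ∈ cfS 𝒜) :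
    ∃ a₀ ∈ 𝒜, ∃ β ∈ cfS 𝒜, 0 ≤ β ∧ β ≤ 1 ∧ α = 1 / ((a₀:ℝ) + β) := by
  obtain ⟨a, ha, hlim⟩ := hα
  have h1 : ∀ i, 1 ≤ a i := fun i => h𝒜 _ (ha i)
  set T : ℕ → ℝ := fun n => cfFin (List.ofFn fun i : Fin n => a i) with hT
  set T' : ℕ → ℝ := fun n => cfFin (List.ofFn fun i : Fin n => a (i+1)) with hT'
  have hmem' : ∀ n, T' n ∈ Set.Icc (0:ℝ) 1 := by
    intro n
    apply cfFin_mem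
    intro x hx
    rw [List.mem_ofFn] at hx
    obtain ⟨i, rfl⟩ := hx
    exact h1 _
  have hkey : ∀ n, T (n+1) = 1 / ((a 0 : ℝ) + T' n) := by
    intro n
    have : (List.ofFn fun i : Fin (n+1) => a i) = a 0 :: (List.ofFn fun i : Fin n => a (i+1)) := by
      rw [List.ofFn_succ]; rfl
    simp only [hT, hT', this, cfFin_cons]
  have ha0 : (1:ℝ) ≤ a 0 := by exact_mod_cast h1 0
  have hden : ∀ n, (1:ℝ) ≤ (a 0 : ℝ) + T' n := fun n => by linarith [(hmem' n).1]
  have hlim' : Filter.Tendsto (fun n => T (n+1)) Filter.atTop (nhds α) :=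
    hlim.comp (Filter.tendsto_add_atTop_nat 1)
  have hTlb : ∀ n, 1 / ((a 0 : ℝ) + 1) ≤ T (n+1) := by
    intro n
    rw [hkey n]
    exact one_div_le_one_div_of_le (by linarith [(hmem' n).1]) (by linarith [(hmem' n).2])
  have hαlb : 1 / ((a 0 : ℝ) + 1) ≤ α := ge_of_tendsto' hlim' hTlb
  have hα0 : (0:ℝ) < α := lt_of_lt_of_le (by positivity) hαlb
  have hinv : ∀ n, T' n = 1 / T (n+1) - a 0 := by
    intro n
    rw [hkey n, one_div_one_div]
    ring
  set β := 1 / α - (a 0 : ℝ) with hβ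
  have hlimβ : Filter.Tendsto T' Filter.atTop (nhds β) := by
    have h2 : Filter.Tendsto (fun n => 1 / T (n+1) - (a 0 : ℝ)) Filter.atTop (nhds β) := by
      apply Filter.Tendsto.sub_const
      simpa [one_div] using (hlim'.inv₀ (ne_of_gt hα0))
    exact h2.congr (fun n => (hinv n).symm)
  have hβ0 : 0 ≤ β := ge_of_tendsto' hlimβ (fun n => (hmem' n).1)
  have hβ1 : β ≤ 1 := le_of_tendsto' hlimβ (fun n => (hmem' n).2)
  refine ⟨a 0, ha 0, β, ⟨fun i => a (i+1), fun i => ha (i+1), hlimβ⟩, hβ0, hβ1, ?_⟩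
  have h2 : (a 0 : ℝ) + β = 1 / α := by rw [hβ]; ring
  rw [h2, one_div_one_div]

lemma cfS_lb {𝒜 : Finset ℕ} (h𝒜 : ∀ x ∈ 𝒜, 1 ≤ x) {A : ℕ} (hA : ∀ x ∈ 𝒜, x ≤ A)
    {α : ℝ} (hα : α ∈ cfS 𝒜) : 1 / ((A:ℝ) + 1) ≤ α ∧ α ≤ 1 := by
  obtain ⟨a₀, ha₀, β, hβS, hβ0, hβ1, rfl⟩ := cfS_struct h𝒜 hα
  have h1 : (1:ℝ) ≤ a₀ := by exact_mod_cast h𝒜 _ ha₀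
  have h2 : (a₀:ℝ) ≤ A := by exact_mod_cast hA _ ha₀
  constructor
  · exact one_div_le_one_div_of_le (by linarith) (by linarith)
  · rw [div_le_one (by linarith)]; linarith

lemma cfS_ub {𝒜 : Finset ℕ} (h𝒜 : ∀ x ∈ 𝒜, 1 ≤ x) {A : ℕ} (hA : ∀ x ∈ 𝒜, x ≤ A)
    {α : ℝ} (hα : α ∈ cfS 𝒜) : α ≤ ((A:ℝ) + 1) / ((A:ℝ) + 2) := by
  obtain ⟨a₀, ha₀, β, hβS, hβ0, hβ1, rfl⟩ := cfS_struct h𝒜 hα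
  have h1 : (1:ℝ) ≤ a₀ := by exact_mod_cast h𝒜 _ ha₀
  have hβlb : 1 / ((A:ℝ) + 1) ≤ β := (cfS_lb h𝒜 hA hβS).1
  have hA0 : (0:ℝ) < (A:ℝ) + 1 := by positivity
  have hden : (0:ℝ) < (a₀:ℝ) + β := by linarith
  rw [div_le_div_iff₀ hden (by linarith)]
  have : 1 / ((A:ℝ) + 1) * ((A:ℝ)+1) = 1 := by field_simp
  nlinarith [mul_le_mul_of_nonneg_left hβlb (le_of_lt hA0)]

/-- denominator bound for `1/q - a`. -/
lemma den_inv_sub (q : ℚ) (hq0 : 0 < q) (a : ℕ) : (1/q - (a:ℚ)).den ≤ q.num.natAbs := by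
  have hqnum : q.num ≠ 0 := Rat.num_ne_zero.mpr (ne_of_gt hq0)
  have hq : (q.num : ℚ) ≠ 0 := by exact_mod_cast hqnum
  have hne : q ≠ 0 := ne_of_gt hq0
  have hmul : q * (q.den : ℚ) = q.num := Rat.mul_den_eq_num q
  have hrepr : 1/q - (a:ℚ) = Rat.divInt ((q.den : ℤ) - a * q.num) q.num := by
    rw [Rat.divInt_eq_div]
    push_cast
    field_simp
    nlinarith [hmul]
  have hdvd : ((1/q - (a:ℚ)).den : ℤ) ∣ q.num := by
    rw [hrepr]; exact Rat.den_dvd _ _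
  have hdvd' : (1/q - (a:ℚ)).den ∣ q.num.natAbs :=
    Int.natCast_dvd_natCast.mp (Int.dvd_natAbs.mpr hdvd)
  exact Nat.le_of_dvd (Int.natAbs_pos.mpr hqnum) hdvd'

/-- KEY CLAIM: admissible slopes are uniformly bounded away from each rational. -/
lemma cfS_rat_far {𝒜 : Finset ℕ} (h𝒜 : ∀ x ∈ 𝒜, 1 ≤ x) {A : ℕ} (hA : ∀ x ∈ 𝒜, x ≤ A)
    (q : ℚ) : ∃ c > 0, ∀ α ∈ cfS 𝒜, c ≤ |α - (q:ℝ)| := by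
  suffices h : ∀ d : ℕ, ∀ q : ℚ, q.den ≤ d → ∃ c > 0, ∀ α ∈ cfS 𝒜, c ≤ |α - (q:ℝ)| by
    exact h q.den q le_rfl
  intro d
  induction d with
  | zero => intro q hq; exact absurd hq (by simpa using q.den_pos.ne')
  | succ d ih =>
    intro q hqd
    rcases le_or_gt q 0 with hq0 | hq0
    · -- q ≤ 0 : distance at least 1/(A+1)
      refine ⟨1 / ((A:ℝ) + 1), by positivity, fun α hα => ?_⟩
      obtain ⟨h1, h2⟩ := cfS_lb h𝒜 hA hα
      have hqr : (q:ℝ) ≤ 0 := by exact_mod_cast hq0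
      rw [abs_of_pos (by linarith [lt_of_lt_of_le (by positivity : (0:ℝ) < 1/((A:ℝ)+1)) h1])]
      linarith
    rcases le_or_gt 1 q with hq1 | hq1
    · -- 1 ≤ q : distance at least 1/(A+2)
      refine ⟨1 / ((A:ℝ) + 2), by positivity, fun α hα => ?_⟩
      have h2 := cfS_ub h𝒜 hA hα
      have hqr : (1:ℝ) ≤ (q:ℝ) := by exact_mod_cast hq1
      have hA0 : (0:ℝ) < (A:ℝ) + 2 := by positivity
      have hαlt : α < 1 := lt_of_le_of_lt h2 (by rw [div_lt_one hA0]; linarith)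
      rw [abs_of_neg (by linarith)]
      have hid : ((A:ℝ)+1)/((A:ℝ)+2) + 1/((A:ℝ)+2) = 1 := by field_simp; ring
      linarith
    · -- 0 < q < 1 : recursive step
      have hnum : 0 < q.num := Rat.num_pos.mpr hq0
      have hnumden : q.num.natAbs < q.den := by
        have hh : (q.num : ℚ) < (q.den : ℚ) := by
          rw [← Rat.mul_den_eq_num]
          have hd : (0:ℚ) < (q.den : ℚ) := by exact_mod_cast q.pos
          nlinarith
        have hh2 : q.num < (q.den : ℤ) := by exact_mod_cast hh
        omega
      have hstep : ∀ a : ℕ, ∃ c > 0, a ∈ 𝒜 → ∀ α ∈ cfS 𝒜, c ≤ |α - ((1/q - a : ℚ) : ℝ)| := by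
        intro a
        by_cases ha : a ∈ 𝒜
        · obtain ⟨c, hc, hc'⟩ := ih (1/q - a) (by
            have := den_inv_sub q hq0 a
            omega)
          exact ⟨c, hc, fun _ => hc'⟩
        · exact ⟨1, one_pos, fun h => absurd h ha⟩
      choose f hf hf' using hstep
      rcases 𝒜.eq_empty_or_nonempty with h𝒜e | h𝒜ne
      · refine ⟨1, one_pos, fun α hα => ?_⟩
        obtain ⟨a, haa, -⟩ := hα
        exact absurd (haa 0) (by simp [h𝒜e])
      set cmin := 𝒜.inf' h𝒜ne f with hcmin
      have hcminpos : 0 < cmin := by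
        obtain ⟨b, hb, hbe⟩ := 𝒜.exists_mem_eq_inf' h𝒜ne f
        rw [hcmin, hbe]; exact hf b
      have hqr0 : (0:ℝ) < (q:ℝ) := by exact_mod_cast hq0
      refine ⟨(q:ℝ) * cmin / ((A:ℝ) + 1), by positivity, fun α hα => ?_⟩
      obtain ⟨a₀, ha₀, β, hβS, hβ0, hβ1, rfl⟩ := cfS_struct h𝒜 hα
      have h1 : (1:ℝ) ≤ a₀ := by exact_mod_cast h𝒜 _ ha₀
      have h2 : (a₀:ℝ) ≤ A := by exact_mod_cast hA _ ha₀
      have hden : (0:ℝ) < (a₀:ℝ) + β := by linarith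
      have hfar : f a₀ ≤ |β - ((1/q - a₀ : ℚ) : ℝ)| := hf' a₀ ha₀ β hβS
      have hcast : ((1/q - a₀ : ℚ) : ℝ) = 1/(q:ℝ) - (a₀:ℝ) := by push_cast; ring
      have hkey : 1 / ((a₀:ℝ) + β) - (q:ℝ) = -(q:ℝ) * (β - (1/(q:ℝ) - a₀)) / ((a₀:ℝ) + β) := by
        field_simp
        ring
      rw [hkey, abs_div, abs_of_pos hden]
      have habs : |(-(q:ℝ)) * (β - (1/(q:ℝ) - a₀))| = (q:ℝ) * |β - (1/(q:ℝ) - a₀)| := by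
        rw [abs_mul, abs_neg, abs_of_pos hqr0]
      rw [habs]
      have hfar' : cmin ≤ |β - (1/(q:ℝ) - a₀)| := by
        rw [← hcast]
        exact le_trans (Finset.inf'_le f ha₀) hfar
      rw [div_le_div_iff₀ (by positivity) hden]
      have hub : (a₀:ℝ) + β ≤ (A:ℝ) + 1 := by linarith
      calc (q:ℝ) * cmin * ((a₀:ℝ) + β) ≤ (q:ℝ) * cmin * ((A:ℝ) + 1) :=
            mul_le_mul_of_nonneg_left hub (by positivity)
        _ ≤ (q:ℝ) * |β - (1/(q:ℝ) - (a₀:ℝ))| * ((A:ℝ) + 1) :=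
            mul_le_mul_of_nonneg_right
              (mul_le_mul_of_nonneg_left hfar' (le_of_lt hqr0)) (by positivity)

lemma abs_le_sqrt_add_sq_left (X Y : ℝ) : |X| ≤ Real.sqrt (X^2 + Y^2) := by
  rw [← Real.sqrt_sq_eq_abs]; exact Real.sqrt_le_sqrt (by nlinarith)

lemma abs_le_sqrt_add_sq_right (X Y : ℝ) : |Y| ≤ Real.sqrt (X^2 + Y^2) := by
  rw [← Real.sqrt_sq_eq_abs]; exact Real.sqrt_le_sqrt (by nlinarith)

lemma pair_bound {𝒜 : Finset ℕ} (h𝒜 : ∀ x ∈ 𝒜, 1 ≤ x) {A : ℕ} (hA : ∀ x ∈ 𝒜, x ≤ A)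
    (u v : ℚ) (huv : ¬(u = 0 ∧ v = 0)) :
    ∃ B > 0, ∀ α ∈ cfS 𝒜, ∀ t : ℝ,
      B ≤ Real.sqrt ((t / Real.sqrt (1 + α ^ 2) - (u:ℝ)) ^ 2 +
        (t * α / Real.sqrt (1 + α ^ 2) - (v:ℝ)) ^ 2) := by
  by_cases hu : u = 0
  · -- then v ≠ 0
    have hv : v ≠ 0 := fun hv => huv ⟨hu, hv⟩
    have hvr : (v:ℝ) ≠ 0 := by exact_mod_cast hv
    refine ⟨|(v:ℝ)| / 2, by positivity, fun α hα t => ?_⟩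
    obtain ⟨hαlb, hαub⟩ := cfS_lb h𝒜 hA hα
    have hα0 : 0 < α := lt_of_lt_of_le (by positivity) hαlb
    set s := Real.sqrt (1 + α ^ 2) with hs
    set τ := t / s with hτ
    have hY : t * α / s - (v:ℝ) = τ * α - v := by rw [hτ]; ring
    rw [hu, hY]
    push_cast
    rcases le_or_gt (|(v:ℝ)|/2) |τ| with h | h
    · calc |(v:ℝ)|/2 ≤ |τ| := h
        _ = |τ - 0| := by rw [sub_zero]
        _ ≤ _ := abs_le_sqrt_add_sq_left _ _
    · have hτα : |τ * α| ≤ |τ| := by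
        rw [abs_mul, abs_of_pos hα0]
        nlinarith [abs_nonneg τ]
      have : |(v:ℝ)|/2 ≤ |τ * α - v| := by
        have h1 : |(v:ℝ)| - |τ * α| ≤ |τ * α - v| := by
          rw [abs_sub_comm]; exact abs_sub_abs_le_abs_sub _ _
        linarith
      exact le_trans this (abs_le_sqrt_add_sq_right _ _)
  · -- u ≠ 0
    have hur : (u:ℝ) ≠ 0 := by exact_mod_cast hu
    obtain ⟨c₀, hc₀, hc₀'⟩ := cfS_rat_far h𝒜 hA (v/u)
    have huv0 : (0:ℝ) < |(u:ℝ)| + |(v:ℝ)| := by positivity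
    refine ⟨min (|(u:ℝ)|/2) ((u:ℝ)^2 * c₀ / (2 * (|(u:ℝ)| + |(v:ℝ)|))), by positivity,
      fun α hα t => ?_⟩
    set s := Real.sqrt (1 + α ^ 2) with hs
    set τ := t / s with hτ
    have hX : t / s - (u:ℝ) = τ - u := rfl
    have hY : t * α / s - (v:ℝ) = τ * α - v := by rw [hτ]; ring
    rw [hX, hY]
    set W := Real.sqrt ((τ - (u:ℝ))^2 + (τ * α - (v:ℝ))^2) with hW
    have hWnn : 0 ≤ W := Real.sqrt_nonneg _
    rcases le_or_gt |τ| (|(u:ℝ)|/2) with h | h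
    · have h1 : |(u:ℝ)| - |τ| ≤ |τ - u| := by
        rw [abs_sub_comm]; exact abs_sub_abs_le_abs_sub _ _
      calc min (|(u:ℝ)|/2) ((u:ℝ)^2 * c₀ / (2 * (|(u:ℝ)| + |(v:ℝ)|))) ≤ |(u:ℝ)|/2 :=
            min_le_left _ _
        _ ≤ |τ - (u:ℝ)| := by linarith
        _ ≤ W := abs_le_sqrt_add_sq_left _ _
    · have h1 : |(v:ℝ) * (τ - u) - (u:ℝ) * (τ * α - v)| ≤ (|(u:ℝ)| + |(v:ℝ)|) * W := by
        calc |(v:ℝ) * (τ - u) - (u:ℝ) * (τ * α - v)|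
            ≤ |(v:ℝ) * (τ - u)| + |(u:ℝ) * (τ * α - v)| := abs_sub _ _
          _ = |(v:ℝ)| * |τ - (u:ℝ)| + |(u:ℝ)| * |τ * α - (v:ℝ)| := by rw [abs_mul, abs_mul]
          _ ≤ |(v:ℝ)| * W + |(u:ℝ)| * W := by
              gcongr
              · exact abs_le_sqrt_add_sq_left _ _
              · exact abs_le_sqrt_add_sq_right _ _
          _ = (|(u:ℝ)| + |(v:ℝ)|) * W := by ring
      have h2 : (v:ℝ) * (τ - u) - (u:ℝ) * (τ * α - v) = τ * ((v:ℝ) - (u:ℝ) * α) := by ring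
      have h3 : |(v:ℝ) - (u:ℝ) * α| = |(u:ℝ)| * |α - (v:ℝ)/(u:ℝ)| := by
        rw [← abs_mul,
          show (u:ℝ) * (α - (v:ℝ)/(u:ℝ)) = -((v:ℝ) - (u:ℝ) * α) by field_simp; ring,
          abs_neg]
      have hfar : c₀ ≤ |α - (v:ℝ)/(u:ℝ)| := by
        have := hc₀' α hα
        rwa [Rat.cast_div] at this
      have h4 : |(u:ℝ)|/2 * (|(u:ℝ)| * c₀) ≤ |τ| * |(v:ℝ) - (u:ℝ) * α| := by
        apply mul_le_mul (le_of_lt h)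
        · rw [h3]; exact mul_le_mul_of_nonneg_left hfar (abs_nonneg _)
        · positivity
        · exact abs_nonneg _
      have h5 : |τ| * |(v:ℝ) - (u:ℝ) * α| ≤ (|(u:ℝ)| + |(v:ℝ)|) * W := by
        rw [← abs_mul, ← h2]; exact h1
      calc min (|(u:ℝ)|/2) ((u:ℝ)^2 * c₀ / (2 * (|(u:ℝ)| + |(v:ℝ)|)))
          ≤ (u:ℝ)^2 * c₀ / (2 * (|(u:ℝ)| + |(v:ℝ)|)) := min_le_right _ _
        _ ≤ W := by
            rw [div_le_iff₀ (by positivity)]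
            nlinarith [sq_abs (u:ℝ)]


/-- Let `𝒜` be a finite set of positive integers, `l > 0`, and let
`Q = (q₁,q₂)`, `Q' = (q₁',q₂')` be rational points of `𝕋² = ℝ²/ℤ²` which are distinct in
the torus. Then there is `C > 0` such that every segment in `𝕋²` with midpoint `Q`, length
at most `l`, and irrational slope `[a₁,a₂,…]` with all `aᵢ ∈ 𝒜`, stays at distance greater
than `C` from `Q'`. (The segment of length `l` is lifted to
`t ↦ Q + t·(1,α)/√(1+α²)`, `t ∈ [−l/2, l/2]`, and the torus distance to `Q'` is the
Euclidean distance to the integer translates `Q' + (m,n)`.) -/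
theorem stmt17 (𝒜 : Finset ℕ) (h𝒜 : ∀ x ∈ 𝒜, 1 ≤ x) (l : ℝ) (hl : 0 < l)
    (q₁ q₂ q₁' q₂' : ℚ)
    (hne : ¬ ∃ m n : ℤ, (q₁' : ℝ) = (q₁ : ℝ) + m ∧ (q₂' : ℝ) = (q₂ : ℝ) + n) :
    ∃ C > 0, ∀ (α : ℝ) (a : ℕ → ℕ), (∀ i, a i ∈ 𝒜) → cfLim a α →
      ∀ t ∈ Set.Icc (-(l / 2)) (l / 2), ∀ m n : ℤ,
        C < Real.sqrt
          (((q₁ : ℝ) + t / Real.sqrt (1 + α ^ 2) - ((q₁' : ℝ) + m)) ^ 2 +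
           ((q₂ : ℝ) + t * α / Real.sqrt (1 + α ^ 2) - ((q₂' : ℝ) + n)) ^ 2) := by
  rcases 𝒜.eq_empty_or_nonempty with h𝒜e | h𝒜ne
  · exact ⟨1, one_pos, fun α a ha _ => absurd (ha 0) (by simp [h𝒜e])⟩
  set A := 𝒜.max' h𝒜ne with hAdef
  have hA : ∀ x ∈ 𝒜, x ≤ A := fun x hx => Finset.le_max' _ _ hx
  have hpair : ∀ p : ℤ × ℤ, ∃ B > 0, ∀ α ∈ cfS 𝒜, ∀ t : ℝ,
      B ≤ Real.sqrt ((t / Real.sqrt (1 + α ^ 2) - ((q₁' + p.1 - q₁ : ℚ):ℝ)) ^ 2 +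
        (t * α / Real.sqrt (1 + α ^ 2) - ((q₂' + p.2 - q₂ : ℚ):ℝ)) ^ 2) := by
    intro p
    apply pair_bound h𝒜 hA
    rintro ⟨hu, hv⟩
    apply hne
    refine ⟨-p.1, -p.2, ?_, ?_⟩
    · have : (q₁' : ℝ) + p.1 - q₁ = 0 := by exact_mod_cast congrArg (Rat.cast (K := ℝ)) hu
      push_cast
      linarith
    · have : (q₂' : ℝ) + p.2 - q₂ = 0 := by exact_mod_cast congrArg (Rat.cast (K := ℝ)) hv
      push_cast
      linarith
  choose B hB hB' using hpair
  set M : ℤ := ⌈|(q₁:ℝ) - q₁'| + |(q₂:ℝ) - q₂'| + l/2 + 1⌉ with hM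
  have hMreal : |(q₁:ℝ) - q₁'| + |(q₂:ℝ) - q₂'| + l/2 + 1 ≤ (M:ℝ) := Int.le_ceil _
  have hM0 : (0:ℤ) ≤ M := by
    have : (0:ℝ) ≤ (M:ℝ) := le_trans (by positivity) hMreal
    exact_mod_cast this
  set P := Finset.Icc (-M) M ×ˢ Finset.Icc (-M) M with hP
  have hPne : P.Nonempty := ⟨(0,0), by simp [hP, Finset.mem_Icc]; omega⟩
  set Bmin := P.inf' hPne B with hBmin
  have hBminpos : 0 < Bmin := by
    obtain ⟨p, hp, hpe⟩ := P.exists_mem_eq_inf' hPne B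
    rw [hBmin, hpe]; exact hB p
  refine ⟨min 1 Bmin / 2, by positivity, ?_⟩
  intro α a ha hlim t ht m n
  have hαS : α ∈ cfS 𝒜 := ⟨a, ha, hlim⟩
  have hs1 : 1 ≤ Real.sqrt (1 + α ^ 2) := by
    have h := Real.sqrt_le_sqrt (by nlinarith : (1:ℝ) ≤ 1 + α ^ 2)
    simpa using h
  have hs0 : 0 < Real.sqrt (1 + α ^ 2) := lt_of_lt_of_le one_pos hs1
  have htabs : |t| ≤ l / 2 := abs_le.mpr ⟨ht.1, ht.2⟩
  have hτ : |t / Real.sqrt (1 + α ^ 2)| ≤ l / 2 := by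
    rw [abs_div, abs_of_pos hs0]
    calc |t| / Real.sqrt (1 + α ^ 2) ≤ |t| / 1 := by
          apply div_le_div_of_nonneg_left (abs_nonneg t) one_pos hs1
      _ = |t| := div_one _
      _ ≤ l / 2 := htabs
  by_cases hmn : m ∈ Finset.Icc (-M) M ∧ n ∈ Finset.Icc (-M) M
  · -- in range: use the pair bound
    have hmem : (m, n) ∈ P := by
      rw [hP, Finset.mem_product]; exact hmn
    have hle := hB' (m, n) α hαS t
    have harg : ((q₁ : ℝ) + t / Real.sqrt (1 + α ^ 2) - ((q₁' : ℝ) + m)) ^ 2 +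
        ((q₂ : ℝ) + t * α / Real.sqrt (1 + α ^ 2) - ((q₂' : ℝ) + n)) ^ 2 =
        (t / Real.sqrt (1 + α ^ 2) - ((q₁' + (m,n).1 - q₁ : ℚ):ℝ)) ^ 2 +
        (t * α / Real.sqrt (1 + α ^ 2) - ((q₂' + (m,n).2 - q₂ : ℚ):ℝ)) ^ 2 := by
      push_cast
      ring
    rw [harg]
    calc min 1 Bmin / 2 < Bmin := by
          rcases le_total (1:ℝ) Bmin with h | h
          · rw [min_eq_left h]; linarith
          · rw [min_eq_right h]; linarith
      _ ≤ B (m, n) := Finset.inf'_le B hmem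
      _ ≤ _ := hle
  · -- out of range: the point is far in one coordinate
    have hbig : (2:ℝ) ≤ Real.sqrt
        (((q₁ : ℝ) + t / Real.sqrt (1 + α ^ 2) - ((q₁' : ℝ) + m)) ^ 2 +
         ((q₂ : ℝ) + t * α / Real.sqrt (1 + α ^ 2) - ((q₂' : ℝ) + n)) ^ 2) := by
      rw [not_and_or] at hmn
      rcases hmn with hm | hn
      · have hmabs : (M:ℝ) + 1 ≤ |(m:ℝ)| := by
          rw [Finset.mem_Icc, not_and_or] at hm
          rcases hm with h | h
          · push_neg at h
            have : m ≤ -M - 1 := by omega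
            rw [abs_of_nonpos (by exact_mod_cast le_trans this (by omega))]
            have : (m:ℝ) ≤ (-M-1 : ℤ) := by exact_mod_cast this
            push_cast at this ⊢
            linarith
          · push_neg at h
            have : M + 1 ≤ m := by omega
            rw [abs_of_nonneg (by exact_mod_cast le_trans (by omega : (0:ℤ) ≤ M+1) this)]
            have : ((M+1 : ℤ):ℝ) ≤ (m:ℝ) := by exact_mod_cast this
            push_cast at this ⊢
            linarith
        have hu : l/2 + 2 ≤ |(q₁':ℝ) + m - q₁| := by
          have h1 : |(m:ℝ)| - |(q₁':ℝ) - q₁| ≤ |(q₁':ℝ) + m - q₁| := by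
            calc |(m:ℝ)| - |(q₁':ℝ) - q₁| ≤ |(m:ℝ) + ((q₁':ℝ) - q₁)| := by
                  have h := abs_sub_abs_le_abs_sub ((m:ℝ)) (-((q₁':ℝ) - q₁))
                  rw [abs_neg, sub_neg_eq_add] at h
                  exact h
              _ = |(q₁':ℝ) + m - q₁| := by ring_nf
          have h2 : |(q₁':ℝ) - q₁| = |(q₁:ℝ) - q₁'| := abs_sub_comm _ _
          linarith [abs_nonneg ((q₂:ℝ) - q₂')]
        have hX : 2 ≤ |(q₁ : ℝ) + t / Real.sqrt (1 + α ^ 2) - ((q₁' : ℝ) + m)| := by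
          have h1 : |(q₁':ℝ) + m - q₁| - |t / Real.sqrt (1 + α ^ 2)| ≤
              |(q₁ : ℝ) + t / Real.sqrt (1 + α ^ 2) - ((q₁' : ℝ) + m)| := by
            rw [show (q₁ : ℝ) + t / Real.sqrt (1 + α ^ 2) - ((q₁' : ℝ) + m) =
              -(((q₁':ℝ) + m - q₁) - t / Real.sqrt (1 + α ^ 2)) by ring, abs_neg]
            exact abs_sub_abs_le_abs_sub _ _
          linarith
        exact le_trans hX (abs_le_sqrt_add_sq_left _ _)
      · have hnabs : (M:ℝ) + 1 ≤ |(n:ℝ)| := by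
          rw [Finset.mem_Icc, not_and_or] at hn
          rcases hn with h | h
          · push_neg at h
            have : n ≤ -M - 1 := by omega
            rw [abs_of_nonpos (by exact_mod_cast le_trans this (by omega))]
            have : (n:ℝ) ≤ (-M-1 : ℤ) := by exact_mod_cast this
            push_cast at this ⊢
            linarith
          · push_neg at h
            have : M + 1 ≤ n := by omega
            rw [abs_of_nonneg (by exact_mod_cast le_trans (by omega : (0:ℤ) ≤ M+1) this)]
            have : ((M+1 : ℤ):ℝ) ≤ (n:ℝ) := by exact_mod_cast this
            push_cast at this ⊢
            linarith
        have hv : l/2 + 2 ≤ |(q₂':ℝ) + n - q₂| := by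
          have h1 : |(n:ℝ)| - |(q₂':ℝ) - q₂| ≤ |(q₂':ℝ) + n - q₂| := by
            calc |(n:ℝ)| - |(q₂':ℝ) - q₂| ≤ |(n:ℝ) + ((q₂':ℝ) - q₂)| := by
                  have h := abs_sub_abs_le_abs_sub ((n:ℝ)) (-((q₂':ℝ) - q₂))
                  rw [abs_neg, sub_neg_eq_add] at h
                  exact h
              _ = |(q₂':ℝ) + n - q₂| := by ring_nf
          have h2 : |(q₂':ℝ) - q₂| = |(q₂:ℝ) - q₂'| := abs_sub_comm _ _
          linarith [abs_nonneg ((q₁:ℝ) - q₁')]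
        have hτα : |t * α / Real.sqrt (1 + α ^ 2)| ≤ l/2 := by
          obtain ⟨hαlb, hαub⟩ := cfS_lb h𝒜 hA hαS
          have hα0 : 0 < α := lt_of_lt_of_le (by positivity) hαlb
          rw [show t * α / Real.sqrt (1 + α ^ 2) = (t / Real.sqrt (1 + α ^ 2)) * α by ring,
            abs_mul, abs_of_pos hα0]
          calc |t / Real.sqrt (1 + α ^ 2)| * α ≤ |t / Real.sqrt (1 + α ^ 2)| * 1 := by
                apply mul_le_mul_of_nonneg_left hαub (abs_nonneg _)
            _ ≤ l/2 := by rw [mul_one]; exact hτ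
        have hY : 2 ≤ |(q₂ : ℝ) + t * α / Real.sqrt (1 + α ^ 2) - ((q₂' : ℝ) + n)| := by
          have h1 : |(q₂':ℝ) + n - q₂| - |t * α / Real.sqrt (1 + α ^ 2)| ≤
              |(q₂ : ℝ) + t * α / Real.sqrt (1 + α ^ 2) - ((q₂' : ℝ) + n)| := by
            rw [show (q₂ : ℝ) + t * α / Real.sqrt (1 + α ^ 2) - ((q₂' : ℝ) + n) =
              -(((q₂':ℝ) + n - q₂) - t * α / Real.sqrt (1 + α ^ 2)) by ring, abs_neg]
            exact abs_sub_abs_le_abs_sub _ _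
          linarith
        exact le_trans hY (abs_le_sqrt_add_sq_right _ _)
    calc min 1 Bmin / 2 ≤ 1 / 2 := by
          have := min_le_left (1:ℝ) Bmin
          linarith
      _ < 2 := by norm_num
      _ ≤ _ := hbig
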